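/- Let C_1 ⊆ F^{n_1} and C_2 ⊆ F^{n_2} be linear codes over a field F. Then the dual of the tensor product code satisfies (C_1 ⊗ C_2)^⊥ = C_1^⊥ ⊗ F^{n_2} + F^{n_1} ⊗ C_2^⊥. -/

import Mathlib

open Finset

def dualCode {F : Type} [Field F] {ι : Type} [Fintype ι] (C : Submodule F (ι → F)) :
    Submodule F (ι → F) where
  carrier := {z | ∀ c ∈ C, ∑ i, z i * c i = 0}
  add_mem' := by
    intro a b ha hb c hc
    simp only [Set.mem_setOf_eq] at *
    simp [Pi.add_apply, add_mul, Finset.sum_add_distrib, ha c hc, hb c hc]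
  zero_mem' := by intro c hc; simp
  smul_mem' := by
    intro r z hz c hc
    simp only [Set.mem_setOf_eq] at *
    simp [Pi.smul_apply, smul_eq_mul, mul_assoc, ← Finset.mul_sum, hz c hc]

def tensCode {F : Type} [Field F] {n₁ n₂ : ℕ} (C₁ : Submodule F (Fin n₁ → F))
    (C₂ : Submodule F (Fin n₂ → F)) : Submodule F (Fin n₁ × Fin n₂ → F) :=
  Submodule.span F {w | ∃ c₁ ∈ C₁, ∃ c₂ ∈ C₂, w = fun p => c₁ p.1 * c₂ p.2}

lemma mem_tensCode {F : Type} [Field F] {n₁ n₂ : ℕ} {C₁ : Submodule F (Fin n₁ → F)}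
    {C₂ : Submodule F (Fin n₂ → F)} {c₁ : Fin n₁ → F} {c₂ : Fin n₂ → F}
    (h₁ : c₁ ∈ C₁) (h₂ : c₂ ∈ C₂) :
    (fun p : Fin n₁ × Fin n₂ => c₁ p.1 * c₂ p.2) ∈ tensCode C₁ C₂ :=
  Submodule.subset_span ⟨c₁, h₁, c₂, h₂, rfl⟩

theorem dual_tensor_code (F : Type) [Field F] (n₁ n₂ : ℕ)
    (C₁ : Submodule F (Fin n₁ → F)) (C₂ : Submodule F (Fin n₂ → F)) :
    dualCode (tensCode C₁ C₂) = tensCode (dualCode C₁) ⊤ ⊔ tensCode ⊤ (dualCode C₂) := by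
  apply le_antisymm
  · intro z hz
    obtain ⟨q, hq⟩ := Submodule.exists_isCompl C₂
    set π : (Fin n₂ → F) →ₗ[F] (Fin n₂ → F) :=
      C₂.subtype ∘ₗ (C₂.linearProjOfIsCompl q hq) with hπ
    have hπmem : ∀ x, π x ∈ C₂ := fun x => (C₂.linearProjOfIsCompl q hq x).2
    have hπfix : ∀ c ∈ C₂, π c = c := by
      intro c hc
      simp [hπ, Submodule.linearProjOfIsCompl_apply_left hq ⟨c, hc⟩]
      exact congrArg Subtype.val (Submodule.linearProjOfIsCompl_apply_left hq ⟨c, hc⟩)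
    set Z₂ : Fin n₁ × Fin n₂ → F :=
      fun p => ∑ k, z (p.1, k) * π (Pi.single p.2 1) k with hZ₂
    -- columns of Z₂ lie in dualCode C₁
    have hcol : ∀ j : Fin n₂, (fun i => ∑ k, z (i, k) * π (Pi.single j 1) k) ∈ dualCode C₁ := by
      intro j c₁ hc₁
      have h := hz _ (mem_tensCode hc₁ (hπmem (Pi.single j 1)))
      rw [Fintype.sum_prod_type] at h
      rw [← h]
      refine Finset.sum_congr rfl fun i _ => ?_
      rw [Finset.sum_mul]
      exact Finset.sum_congr rfl fun k _ => by ring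
    have h1 : Z₂ ∈ tensCode (dualCode C₁) ⊤ := by
      have : Z₂ = ∑ j : Fin n₂,
          (fun p : Fin n₁ × Fin n₂ =>
            (fun i => ∑ k, z (i, k) * π (Pi.single j 1) k) p.1 * (Pi.single j 1 : Fin n₂ → F) p.2) := by
        funext p
        rw [Finset.sum_apply]
        simp [Pi.single_apply, mul_ite, Finset.sum_ite_eq']
        rfl
      rw [this]
      exact Submodule.sum_mem _ fun j _ => mem_tensCode (hcol j) Submodule.mem_top
    have h2 : z - Z₂ ∈ tensCode ⊤ (dualCode C₂) := by
      have hrow : ∀ i : Fin n₁, (fun j => z (i, j) - Z₂ (i, j)) ∈ dualCode C₂ := by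
        intro i c₂ hc₂
        have hc2 : (π c₂ : Fin n₂ → F) = c₂ := hπfix c₂ hc₂
        have hdecomp : c₂ = ∑ j : Fin n₂, c₂ j • (Pi.single j 1 : Fin n₂ → F) := by
          funext k
          rw [Finset.sum_apply]
          simp [Pi.single_apply, Finset.sum_ite_eq]
        have hπc : (π c₂ : Fin n₂ → F) = ∑ j : Fin n₂, c₂ j • π (Pi.single j 1) := by
          conv_lhs => rw [hdecomp]
          rw [map_sum]
          exact Finset.sum_congr rfl fun j _ => by rw [map_smul]
        have key : ∑ j, Z₂ (i, j) * c₂ j = ∑ j, z (i, j) * c₂ j := by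
          calc ∑ j, Z₂ (i, j) * c₂ j
              = ∑ j, ∑ k, z (i, k) * (c₂ j • π (Pi.single j 1)) k := by
                refine Finset.sum_congr rfl fun j _ => ?_
                rw [Finset.sum_mul]
                refine Finset.sum_congr rfl fun k _ => ?_
                simp [smul_eq_mul]; ring
            _ = ∑ k, z (i, k) * (∑ j, c₂ j • π (Pi.single j 1)) k := by
                rw [Finset.sum_comm]
                refine Finset.sum_congr rfl fun k _ => ?_
                rw [Finset.sum_apply, Finset.mul_sum]
            _ = ∑ k, z (i, k) * c₂ k := by rw [← hπc, hc2]
        simp only [sub_mul, Finset.sum_sub_distrib]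
        rw [key, sub_self]
      have : z - Z₂ = ∑ i : Fin n₁,
          (fun p : Fin n₁ × Fin n₂ =>
            (Pi.single i 1 : Fin n₁ → F) p.1 * (fun j => z (i, j) - Z₂ (i, j)) p.2) := by
        funext p
        rw [Finset.sum_apply]
        simp [Pi.single_apply, ite_mul, Finset.sum_ite_eq]
      rw [this]
      exact Submodule.sum_mem _ fun i _ => mem_tensCode Submodule.mem_top (hrow i)
    have := Submodule.add_mem_sup h1 h2
    simpa using this
  · rw [sup_le_iff]
    constructor <;>
    · rw [tensCode, Submodule.span_le]
      rintro w ⟨c₁, hc₁, c₂, hc₂, rfl⟩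
      intro c hc
      induction hc using Submodule.span_induction with
      | mem x hx =>
        obtain ⟨d₁, hd₁, d₂, hd₂, rfl⟩ := hx
        rw [Fintype.sum_prod_type,
          show (∑ i, ∑ j, (fun p : Fin n₁ × Fin n₂ => c₁ p.1 * c₂ p.2) (i, j) * (fun p : Fin n₁ × Fin n₂ => d₁ p.1 * d₂ p.2) (i, j))
            = (∑ i, c₁ i * d₁ i) * (∑ j, c₂ j * d₂ j) from by
              rw [Finset.sum_mul_sum]
              exact Finset.sum_congr rfl fun i _ => Finset.sum_congr rfl fun j _ => by ring]
        first
        | rw [hc₁ d₁ hd₁, zero_mul]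
        | rw [hc₂ d₂ hd₂, mul_zero]
      | zero => simp
      | add x y _ _ hx hy => simp [mul_add, Finset.sum_add_distrib, hx, hy]
      | smul a x _ hx =>
        simp only [Pi.smul_apply, smul_eq_mul]
        have h : ∑ p : Fin n₁ × Fin n₂, c₁ p.1 * c₂ p.2 * (a * x p)
            = a * ∑ p : Fin n₁ × Fin n₂, c₁ p.1 * c₂ p.2 * x p := by
          rw [Finset.mul_sum]
          exact Finset.sum_congr rfl fun p _ => by ring
        rw [h, hx, mul_zero]
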